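/- Let G ≤ GL(Λ) be a finite group with infinite normalizer N_{GL(Λ)}(G), and let z ∈ V be a point whose orbit Gz spans V linearly. Then the orbit of z under N_{GL(Λ)}(G) is infinite; consequently the normalizer equivalence class of z contains infinitely many translation equivalence classes. -/

import Mathlib

open Set

private lemma fiber_count {α β : Type*} {s : Set α} (hs : s.Infinite)
    (f : α → β) (hf : ∀ b, {a | a ∈ s ∧ f a = b}.Finite) : (f '' s).Infinite := by
  intro hfin
  refine hs ?_
  have hsub : s ⊆ ⋃ b ∈ f '' s, {a | a ∈ s ∧ f a = b} := fun a ha =>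
    mem_biUnion (mem_image_of_mem f ha) ⟨ha, rfl⟩
  exact (hfin.biUnion fun b _ => hf b).subset hsub

private lemma shrink_zero {V : Type*} [AddCommGroup V] [Module ℝ V]
    {ι : Type*} (bV : Module.Basis ι ℝ V) {lam : ℝ} {x : V}
    (hne : lam ≠ 0) (hlt : |lam| < 1)
    (h : ∀ n : ℕ, lam ^ n • x ∈ Submodule.span ℤ (Set.range ⇑bV)) : x = 0 := by
  have hco : ∀ i, bV.repr x i = 0 := by
    intro i
    by_contra hri
    have hrpos : 0 < |bV.repr x i| := abs_pos.mpr hri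
    obtain ⟨n, hn⟩ := exists_pow_lt_of_lt_one (inv_pos.mpr hrpos) hlt
    obtain ⟨m, hm⟩ := ((bV.mem_span_iff_repr_mem ℤ _).mp (h n)) i
    rw [map_smul, Finsupp.smul_apply, smul_eq_mul] at hm
    have hm' : (m : ℝ) = lam ^ n * bV.repr x i := by
      rw [← hm]; simp
    have h1 : |(m : ℝ)| < 1 := by
      rw [hm', abs_mul, abs_pow]
      calc |lam| ^ n * |bV.repr x i| < |bV.repr x i|⁻¹ * |bV.repr x i| := by
            exact mul_lt_mul_of_pos_right hn hrpos
        _ = 1 := inv_mul_cancel₀ (ne_of_gt hrpos)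
    have hm0 : m = 0 := by
      have : |m| < 1 := by exact_mod_cast (by rwa [← Int.cast_abs] at h1 : ((|m| : ℤ) : ℝ) < 1)
      exact Int.abs_lt_one_iff.mp this
    rw [hm0, Int.cast_zero] at hm'
    have := (mul_eq_zero.mp hm'.symm).resolve_left (pow_ne_zero n hne)
    exact hri this
  refine bV.ext_elem fun i => ?_
  simp [hco i]

/-- If the normalizer of the finite group `G` in `GL(Λ)` is infinite and the
orbit `Gz` spans `V` linearly, then the orbit of `z` under the normalizer is infinite, and
the normalizer equivalence class of `z` contains infinitely many pairwise non-translation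
equivalent points. -/
theorem stmt_10 {V : Type*} [AddCommGroup V] [Module ℝ V] [FiniteDimensional ℝ V]
    {ι : Type*} [Fintype ι] (bV : Module.Basis ι ℝ V)
    (Λ : Submodule ℤ V) (hΛ : (Λ : Set V) = ↑(Submodule.span ℤ (Set.range ⇑bV)))
    (G : Subgroup (V ≃ₗ[ℝ] V)) (hGfin : Finite G)
    (hGΛ : ∀ g ∈ G, ⇑g '' (Λ : Set V) = (Λ : Set V))
    (hNinf : {S : V ≃ₗ[ℝ] V | ⇑S '' (Λ : Set V) = (Λ : Set V) ∧ S ∈ Subgroup.normalizer (G : Set (V ≃ₗ[ℝ] V))}.Infinite)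
    (z : V) (hspan : Submodule.span ℝ {x | ∃ g ∈ G, x = g z} = ⊤) :
    {w : V | ∃ S : V ≃ₗ[ℝ] V,
        (⇑S '' (Λ : Set V) = (Λ : Set V) ∧ S ∈ Subgroup.normalizer (G : Set (V ≃ₗ[ℝ] V))) ∧ w = S z}.Infinite ∧
    ∃ f : ℕ → V,
      (∀ n, ∃ (S : V ≃ₗ[ℝ] V) (b : V),
        (⇑S '' (Λ : Set V) = (Λ : Set V) ∧ S ∈ Subgroup.normalizer (G : Set (V ≃ₗ[ℝ] V))) ∧
        b ∈ Λ ∧ (∀ g ∈ G, g b = b) ∧ f n = S z + b) ∧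
      ∀ n n', n ≠ n' → ¬(f n - f n' ∈ Λ ∧ ∀ g ∈ G, g (f n - f n') = f n - f n') := by
  classical
  haveI : Fintype G := Fintype.ofFinite G
  set N : Set (V ≃ₗ[ℝ] V) :=
    {S : V ≃ₗ[ℝ] V | ⇑S '' (Λ : Set V) = (Λ : Set V) ∧ S ∈ Subgroup.normalizer (G : Set (V ≃ₗ[ℝ] V))} with hNdef
  -- basic application lemmas for the group structure on V ≃ₗ[ℝ] V
  have hmulapp : ∀ (f g : V ≃ₗ[ℝ] V) (x : V), (f * g) x = f (g x) := fun _ _ _ => rfl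
  have hinvapp : ∀ (f : V ≃ₗ[ℝ] V) (x : V), f⁻¹ (f x) = x := fun f x => f.symm_apply_apply x
  have hinvapp' : ∀ (f : V ≃ₗ[ℝ] V) (x : V), f (f⁻¹ x) = x := fun f x => f.apply_symm_apply x
  -- membership characterisation of lattice preservation
  have hmemΛ : ∀ S : V ≃ₗ[ℝ] V, ⇑S '' (Λ : Set V) = (Λ : Set V) → ∀ x : V,
      (S x ∈ Λ ↔ x ∈ Λ) := by
    intro S hS x
    constructor
    · intro hx
      have hx' : S x ∈ ⇑S '' (Λ : Set V) := by rw [hS]; exact hx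
      obtain ⟨y, hy, hyx⟩ := hx'
      rwa [← S.injective hyx]
    · intro hx
      have : S x ∈ ⇑S '' (Λ : Set V) := ⟨x, hx, rfl⟩
      rwa [hS] at this
  have himage : ∀ S : V ≃ₗ[ℝ] V, (∀ x : V, (S x ∈ Λ ↔ x ∈ Λ)) →
      ⇑S '' (Λ : Set V) = (Λ : Set V) := by
    intro S hS
    ext y
    constructor
    · rintro ⟨x, hx, rfl⟩; exact (hS x).mpr hx
    · intro hy
      refine ⟨S.symm y, ?_, S.apply_symm_apply y⟩
      have := (hS (S.symm y))
      rw [S.apply_symm_apply] at this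
      exact this.mp hy
  -- N is closed under the group operations
  have hNmul : ∀ S T : V ≃ₗ[ℝ] V, S ∈ N → T ∈ N → S * T ∈ N := by
    intro S T hS hT
    refine ⟨himage _ fun x => ?_, mul_mem hS.2 hT.2⟩
    rw [hmulapp, hmemΛ S hS.1, hmemΛ T hT.1]
  have hNinv : ∀ S : V ≃ₗ[ℝ] V, S ∈ N → S⁻¹ ∈ N := by
    intro S hS
    refine ⟨himage _ fun x => ?_, inv_mem hS.2⟩
    constructor
    · intro hx
      have := (hmemΛ S hS.1 (S⁻¹ x)).mpr hx
      rwa [hinvapp'] at this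
    · intro hx
      have := (hmemΛ S hS.1 (S⁻¹ x))
      rw [hinvapp'] at this
      exact this.mp hx
  -- orbit of z under G is finite
  have hOeq : {x : V | ∃ g ∈ G, x = g z} = Set.range (fun g : G => (g : V ≃ₗ[ℝ] V) z) := by
    ext x
    constructor
    · rintro ⟨g, hg, rfl⟩; exact ⟨⟨g, hg⟩, rfl⟩
    · rintro ⟨g, rfl⟩; exact ⟨g, g.2, rfl⟩
  have hOfin : {x : V | ∃ g ∈ G, x = g z}.Finite := by
    rw [hOeq]; exact Set.finite_range _
  -- extensionality on the spanning orbit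
  have hext : ∀ S T : V ≃ₗ[ℝ] V, (∀ g ∈ G, S (g z) = T (g z)) → S = T := by
    intro S T h
    have : (S : V →ₗ[ℝ] V) = (T : V →ₗ[ℝ] V) := by
      apply LinearMap.ext_on hspan
      rintro x ⟨g, hg, rfl⟩
      exact h g hg
    exact LinearEquiv.toLinearMap_injective this
  -- the stabilizer of z in N is finite
  have hstab : {c : V ≃ₗ[ℝ] V | c ∈ N ∧ c z = z}.Finite := by
    apply Set.Finite.of_finite_image (f := fun c : V ≃ₗ[ℝ] V => fun g : G => c ((g : V ≃ₗ[ℝ] V) z))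
    · apply Set.Finite.subset (Set.Finite.pi (fun _ : G => hOfin))
      rintro _ ⟨c, ⟨⟨hcΛ, hcn⟩, hcz⟩, rfl⟩
      intro g _
      have hczinv : c⁻¹ z = z := by
        conv_lhs => rw [← hcz]
        exact hinvapp c z
      have hg' : c * (g : V ≃ₗ[ℝ] V) * c⁻¹ ∈ G :=
        (Subgroup.mem_normalizer_iff.mp hcn (g : V ≃ₗ[ℝ] V)).mp g.2
      refine ⟨c * (g : V ≃ₗ[ℝ] V) * c⁻¹, hg', ?_⟩
      rw [hmulapp, hmulapp, hczinv]
    · intro c hc c' hc' h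
      refine hext c c' fun g hg => ?_
      exact congrFun h ⟨g, hg⟩
  -- fibers of S ↦ S z over N are finite
  have hfiber : ∀ w : V, {S : V ≃ₗ[ℝ] V | S ∈ N ∧ S z = w}.Finite := by
    intro w
    rcases Set.eq_empty_or_nonempty {S : V ≃ₗ[ℝ] V | S ∈ N ∧ S z = w} with he | ⟨S₀, hS₀⟩
    · rw [he]; exact Set.finite_empty
    · apply Set.Finite.of_finite_image (f := fun S : V ≃ₗ[ℝ] V => S₀⁻¹ * S)
      · apply hstab.subset
        rintro _ ⟨S, hS, rfl⟩
        refine ⟨hNmul _ _ (hNinv _ hS₀.1) hS.1, ?_⟩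
        rw [hmulapp, hS.2, ← hS₀.2, hinvapp]
      · intro a _ b _ h
        exact mul_left_cancel h
  -- the averaging operator (without normalisation)
  set T : V →ₗ[ℝ] V := ∑ g : G, ((g : V ≃ₗ[ℝ] V) : V →ₗ[ℝ] V) with hTdef
  have hT_apply : ∀ v : V, T v = ∑ g : G, (g : V ≃ₗ[ℝ] V) v := by
    intro v
    rw [hTdef, LinearMap.sum_apply]
    rfl
  have hTorb : ∀ g ∈ G, T ((g : V ≃ₗ[ℝ] V) z) = T z := by
    intro g hg
    rw [hT_apply, hT_apply]
    refine Fintype.sum_equiv (Equiv.mulRight (⟨g, hg⟩ : G)) _ _ fun h => ?_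
    show (h : V ≃ₗ[ℝ] V) (g z) = ((h * ⟨g, hg⟩ : G) : V ≃ₗ[ℝ] V) z
    rw [Subgroup.coe_mul, hmulapp]
  have hTcomm : ∀ c : V ≃ₗ[ℝ] V, c ∈ Subgroup.normalizer (G : Set (V ≃ₗ[ℝ] V)) → ∀ v : V, T (c v) = c (T v) := by
    intro c hc v
    rw [hT_apply, hT_apply, map_sum]
    let e : G ≃ G := {
      toFun := fun g => ⟨c⁻¹ * (g : V ≃ₗ[ℝ] V) * c, by
          have := (Subgroup.mem_normalizer_iff.mp (inv_mem hc) (g : V ≃ₗ[ℝ] V)).mp g.2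
          rwa [inv_inv] at this⟩
      invFun := fun g => ⟨c * (g : V ≃ₗ[ℝ] V) * c⁻¹,
          (Subgroup.mem_normalizer_iff.mp hc _).mp g.2⟩
      left_inv := fun g => Subtype.ext (by group)
      right_inv := fun g => Subtype.ext (by group) }
    refine Fintype.sum_equiv e _ _ fun g => ?_
    show (g : V ≃ₗ[ℝ] V) (c v) = c ((c⁻¹ * (g : V ≃ₗ[ℝ] V) * c) v)
    rw [hmulapp, hmulapp, hinvapp']
  -- the range of T is contained in the span of T z
  have hTrange : ∀ v : V, T v ∈ Submodule.span ℝ {T z} := by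
    intro v
    have hle : Submodule.span ℝ {x : V | ∃ g ∈ G, x = g z} ≤
        Submodule.comap T (Submodule.span ℝ {T z}) := by
      apply Submodule.span_le.mpr
      rintro x ⟨g, hg, rfl⟩
      show T (g z) ∈ Submodule.span ℝ {T z}
      rw [hTorb g hg]
      exact Submodule.mem_span_singleton_self _
    have : v ∈ Submodule.comap T (Submodule.span ℝ {T z}) := by
      apply hle
      rw [hspan]
      trivial
    exact this
  -- T acts as multiplication by |G| on G-fixed vectors
  have hTfix : ∀ b : V, (∀ g ∈ G, g b = b) → T b = (Fintype.card G : ℝ) • b := by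
    intro b hb
    rw [hT_apply]
    have : ∀ g : G, (g : V ≃ₗ[ℝ] V) b = b := fun g => hb g g.2
    rw [Finset.sum_congr rfl fun g _ => this g, Finset.sum_const, Finset.card_univ,
      ← Nat.cast_smul_eq_nsmul ℝ]
  have hκpos : (0 : ℝ) < (Fintype.card G : ℝ) := by
    have : 0 < Fintype.card G := Fintype.card_pos
    exact_mod_cast this
  -- the set of possible "translation parts" is finite
  set B : Set V := {b' : V | (b' ∈ Λ ∧ ∀ g ∈ G, g b' = b') ∧
    ∃ c : V ≃ₗ[ℝ] V, c ∈ N ∧ c z = z + b'} with hBdef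
  have hBfin : B.Finite := by
    apply Set.Finite.subset
      ((Set.finite_singleton ((-2 / (Fintype.card G : ℝ)) • T z)).insert (0 : V))
    rintro b' ⟨⟨hbΛ, hbfix⟩, c, hcN, hcz⟩
    rw [Set.mem_insert_iff, Set.mem_singleton_iff]
    have hTb : T b' = (Fintype.card G : ℝ) • b' := hTfix b' hbfix
    have hbspan : b' ∈ Submodule.span ℝ {T z} := by
      have h1 := hTrange b'
      rw [hTb] at h1
      have h3 : b' = ((Fintype.card G : ℝ))⁻¹ • ((Fintype.card G : ℝ) • b') := by
        rw [smul_smul, inv_mul_cancel₀ (ne_of_gt hκpos), one_smul]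
      rw [h3]
      exact Submodule.smul_mem _ _ h1
    obtain ⟨t, ht⟩ := Submodule.mem_span_singleton.mp hbspan
    by_cases hu0 : T z = 0
    · left
      rw [← ht, hu0, smul_zero]
    -- c acts on the line through T z by the scalar lam
    have hcu : c (T z) = (1 + (Fintype.card G : ℝ) * t) • T z := by
      have h1 : T (c z) = c (T z) := hTcomm c hcN.2 z
      rw [hcz, map_add, hTb, ← ht] at h1
      rw [← h1]
      module
    set lam : ℝ := 1 + (Fintype.card G : ℝ) * t with hlam
    have hlamne : lam ≠ 0 := by
      intro h0
      rw [h0, zero_smul] at hcu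
      exact hu0 (c.map_eq_zero_iff.mp hcu)
    have hcb : c b' = lam • b' := by
      rw [← ht, map_smul, hcu]
      module
    have hcib : c⁻¹ b' = lam⁻¹ • b' := by
      have h1 : c⁻¹ (c b') = c⁻¹ (lam • b') := by rw [hcb]
      rw [hinvapp, map_smul] at h1
      -- h1 : b' = lam • c⁻¹ b'
      conv_rhs => rw [h1, smul_smul, inv_mul_cancel₀ hlamne, one_smul]
    have hpow : ∀ n : ℕ, lam ^ n • b' ∈ Λ := by
      intro n
      induction n with
      | zero => rwa [pow_zero, one_smul]
      | succ n ih =>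
        have h1 : c (lam ^ n • b') ∈ Λ := (hmemΛ c hcN.1 _).mpr ih
        rwa [map_smul, hcb, smul_smul, ← pow_succ] at h1
    have hpowinv : ∀ n : ℕ, (lam⁻¹) ^ n • b' ∈ Λ := by
      intro n
      induction n with
      | zero => rwa [pow_zero, one_smul]
      | succ n ih =>
        have h1 : c⁻¹ ((lam⁻¹) ^ n • b') ∈ Λ := (hmemΛ c⁻¹ (hNinv c hcN).1 _).mpr ih
        rwa [map_smul, hcib, smul_smul, ← pow_succ] at h1
    have hmemspan : ∀ x : V, x ∈ Λ → x ∈ Submodule.span ℤ (Set.range ⇑bV) := by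
      intro x hx
      have : x ∈ (Λ : Set V) := hx
      rwa [hΛ] at this
    rcases lt_trichotomy |lam| 1 with hlt | heq | hgt
    · left
      exact shrink_zero bV hlamne hlt fun n => hmemspan _ (hpow n)
    · rcases (abs_eq zero_le_one).mp heq with h1 | h1
      · left
        have ht0 : t = 0 := by
          have : (Fintype.card G : ℝ) * t = 0 := by
            have := hlam.symm.trans h1
            linarith
          exact (mul_eq_zero.mp this).resolve_left (ne_of_gt hκpos)
        rw [← ht, ht0, zero_smul]
      · right
        have ht2 : t = -2 / (Fintype.card G : ℝ) := by
          have h2 : (Fintype.card G : ℝ) * t = -2 := by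
            have := hlam.symm.trans h1
            linarith
          field_simp
          linarith
        rw [← ht, ht2]
    · left
      have hne' : lam⁻¹ ≠ 0 := inv_ne_zero hlamne
      have hlt' : |lam⁻¹| < 1 := by
        rw [abs_inv]
        rw [inv_lt_one_iff₀]
        right
        exact hgt
      exact shrink_zero bV hne' hlt' fun n => hmemspan _ (hpowinv n)
  -- the subgroup of G-fixed lattice vectors
  let K : AddSubgroup V := {
    carrier := {b : V | b ∈ Λ ∧ ∀ g ∈ G, g b = b}
    zero_mem' := ⟨Submodule.zero_mem Λ, fun g _ => map_zero g⟩
    add_mem' := fun ha hb => ⟨Submodule.add_mem Λ ha.1 hb.1,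
      fun g hg => by rw [map_add, ha.2 g hg, hb.2 g hg]⟩
    neg_mem' := fun ha => ⟨Submodule.neg_mem Λ ha.1,
      fun g hg => by rw [map_neg, ha.2 g hg]⟩ }
  have hKmem : ∀ x : V, x ∈ K ↔ (x ∈ Λ ∧ ∀ g ∈ G, g x = x) := fun x => Iff.rfl
  -- fibers of S ↦ [S z] over N are finite
  have hfiberQ : ∀ w : V ⧸ K,
      {S : V ≃ₗ[ℝ] V | S ∈ N ∧ (QuotientAddGroup.mk (S z) : V ⧸ K) = w}.Finite := by
    intro w
    rcases Set.eq_empty_or_nonempty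
      {S : V ≃ₗ[ℝ] V | S ∈ N ∧ (QuotientAddGroup.mk (S z) : V ⧸ K) = w} with he | ⟨S₀, hS₀⟩
    · rw [he]; exact Set.finite_empty
    · have hsub : {S : V ≃ₗ[ℝ] V | S ∈ N ∧ (QuotientAddGroup.mk (S z) : V ⧸ K) = w} ⊆
          ⋃ b' ∈ B, {S : V ≃ₗ[ℝ] V | S ∈ N ∧ S z = S₀ z + S₀ b'} := by
        intro S hS
        have hq : (QuotientAddGroup.mk (S z) : V ⧸ K) = QuotientAddGroup.mk (S₀ z) :=
          hS.2.trans hS₀.2.symm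
        have hb : S z - S₀ z ∈ K := (QuotientAddGroup.eq_iff_sub_mem).mp hq
        obtain ⟨hbΛ, hbfix⟩ := (hKmem _).mp hb
        have hb'Λ : S₀⁻¹ (S z - S₀ z) ∈ Λ := by
          have := (hmemΛ (S₀⁻¹) (hNinv S₀ hS₀.1).1 (S z - S₀ z))
          exact this.mpr hbΛ
        have hb'fix : ∀ g ∈ G, g (S₀⁻¹ (S z - S₀ z)) = S₀⁻¹ (S z - S₀ z) := by
          intro g hg
          have hg' : S₀ * g * S₀⁻¹ ∈ G :=
            (Subgroup.mem_normalizer_iff.mp hS₀.1.2 g).mp hg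
          have h1 : S₀ (g (S₀⁻¹ (S z - S₀ z))) = S₀ (S₀⁻¹ (S z - S₀ z)) := by
            rw [hinvapp']
            have := hbfix (S₀ * g * S₀⁻¹) hg'
            rw [hmulapp, hmulapp] at this
            exact this
          exact S₀.injective h1
        have hb'B : S₀⁻¹ (S z - S₀ z) ∈ B := by
          refine ⟨⟨hb'Λ, hb'fix⟩, S₀⁻¹ * S, hNmul _ _ (hNinv S₀ hS₀.1) hS.1, ?_⟩
          rw [hmulapp, map_sub, hinvapp]
          abel
        refine Set.mem_biUnion hb'B ?_
        refine ⟨hS.1, ?_⟩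
        rw [hinvapp']
        abel
      exact ((hBfin.biUnion fun b' _ => hfiber (S₀ z + S₀ b')).subset hsub)
  -- the image of N in the quotient V ⧸ K is infinite
  have hQinf : ((fun S : V ≃ₗ[ℝ] V => (QuotientAddGroup.mk (S z) : V ⧸ K)) '' N).Infinite :=
    fiber_count hNinf _ fun w => hfiberQ w
  -- part 1
  have hOrbEq : {w : V | ∃ S : V ≃ₗ[ℝ] V,
      (⇑S '' (Λ : Set V) = (Λ : Set V) ∧ S ∈ Subgroup.normalizer (G : Set (V ≃ₗ[ℝ] V))) ∧ w = S z} =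
      (fun S : V ≃ₗ[ℝ] V => S z) '' N := by
    ext w
    constructor
    · rintro ⟨S, hS, rfl⟩; exact ⟨S, hS, rfl⟩
    · rintro ⟨S, hS, rfl⟩; exact ⟨S, hS, rfl⟩
  have hpart1 : {w : V | ∃ S : V ≃ₗ[ℝ] V,
      (⇑S '' (Λ : Set V) = (Λ : Set V) ∧ S ∈ Subgroup.normalizer (G : Set (V ≃ₗ[ℝ] V))) ∧ w = S z}.Infinite := by
    rw [hOrbEq]
    intro hfin
    refine hQinf ?_
    have heq : (fun S : V ≃ₗ[ℝ] V => (QuotientAddGroup.mk (S z) : V ⧸ K)) '' N =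
        (QuotientAddGroup.mk : V → V ⧸ K) '' ((fun S : V ≃ₗ[ℝ] V => S z) '' N) := by
      rw [Set.image_image]
    rw [heq]
    exact hfin.image _
  refine ⟨hpart1, ?_⟩
  -- part 2
  let e := hQinf.natEmbedding
  have hch : ∀ n : ℕ, ∃ S : V ≃ₗ[ℝ] V, S ∈ N ∧
      (QuotientAddGroup.mk (S z) : V ⧸ K) = (e n : V ⧸ K) := by
    intro n
    obtain ⟨S, hS, h⟩ := (e n).2
    exact ⟨S, hS, h⟩
  choose Sf hSf hSfq using hch
  refine ⟨fun n => Sf n z, fun n => ⟨Sf n, 0, hSf n, Submodule.zero_mem Λ,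
    fun g _ => map_zero g, (add_zero _).symm⟩, ?_⟩
  intro n n' hne hcon
  apply hne
  have hK : Sf n z - Sf n' z ∈ K := (hKmem _).mpr hcon
  have hq : (QuotientAddGroup.mk (Sf n z) : V ⧸ K) = QuotientAddGroup.mk (Sf n' z) :=
    (QuotientAddGroup.eq_iff_sub_mem).mpr hK
  have : (e n : V ⧸ K) = (e n' : V ⧸ K) := by
    rw [← hSfq n, ← hSfq n', hq]
  exact e.injective (Subtype.coe_injective this)
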